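/- On the stable big space (V × ℝʰ) ⊕ (V* × ℝʰ) with the natural neutral pairing G, the set L = {(♯_W α − u·Z, α(Z)) ⊕ (α, u) : α ∈ V*, u ∈ ℝʰ}, where W is a skew-symmetric bivector on V with ♯_W α defined by β(♯_W α) = W(α,β), and Z = (Z₁,…,Z_h) is an h-tuple of vectors in V with α(Z) = (α(Zₐ)), is a maximally isotropic subspace of dimension dim V + h. -/
import Mathlib


open scoped BigOperators

/-- The natural neutral pairing on the stable big space
`(V × ℝʰ) ⊕ (V* × ℝʰ)`. -/
noncomputable def stablePairing (V : Type*) [AddCommGroup V] [Module ℝ V] (h : ℕ)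
    (p q : (V × (Fin h → ℝ)) × (Module.Dual ℝ V × (Fin h → ℝ))) : ℝ :=
  (1 / 2) * (q.2.1 p.1.1 + p.2.1 q.1.1 +
    ∑ a, p.1.2 a * q.2.2 a + ∑ a, q.1.2 a * p.2.2 a)

/-- Parametrization of `L`. -/
noncomputable def Lparam (V : Type*) [AddCommGroup V] [Module ℝ V] (h : ℕ)
    (sharpW : Module.Dual ℝ V →ₗ[ℝ] V) (Z : Fin h → V) :
    (Module.Dual ℝ V × (Fin h → ℝ)) →ₗ[ℝ]
      ((V × (Fin h → ℝ)) × (Module.Dual ℝ V × (Fin h → ℝ))) where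
  toFun x := ((sharpW x.1 - ∑ a, x.2 a • Z a, fun a => x.1 (Z a)), (x.1, x.2))
  map_add' x y := by
    ext <;> simp [Finset.sum_add_distrib, add_smul] <;> abel
  map_smul' c x := by
    ext <;> simp [Finset.smul_sum, smul_smul, smul_sub]

/-- For a skew bivector `W` on `V`, encoded by `♯_W : V* → V` with
`β(♯_W α) = W(α,β)` (so `β(♯_W α) = −α(♯_W β)`), and an `h`-tuple of vectors
`Z`, the set `L = {(♯_W α − u·Z, α(Z)) ⊕ (α,u)}` is maximally isotropic of
dimension `dim V + h`. -/
theorem stmt2 (V : Type*) [AddCommGroup V] [Module ℝ V] [FiniteDimensional ℝ V]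
    (h : ℕ) (sharpW : Module.Dual ℝ V →ₗ[ℝ] V)
    (hW : ∀ α β : Module.Dual ℝ V, β (sharpW α) = -α (sharpW β))
    (Z : Fin h → V)
    (L : Submodule ℝ ((V × (Fin h → ℝ)) × (Module.Dual ℝ V × (Fin h → ℝ))))
    (hL : ∀ p, p ∈ L ↔ ∃ (α : Module.Dual ℝ V) (u : Fin h → ℝ),
        p = ((sharpW α - ∑ a, u a • Z a, fun a => α (Z a)), (α, u))) :
    (∀ p ∈ L, ∀ q ∈ L, stablePairing V h p q = 0) ∧
    Module.finrank ℝ L = Module.finrank ℝ V + h := by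
  constructor
  · rintro p hp q hq
    obtain ⟨α, u, rfl⟩ := (hL p).mp hp
    obtain ⟨β, v, rfl⟩ := (hL q).mp hq
    simp only [stablePairing, map_sub, map_sum, map_smul, smul_eq_mul]
    rw [hW α β]
    ring_nf
    have hc : ∀ f g : Fin h → ℝ, ∑ x, f x * g x = ∑ x, g x * f x :=
      fun f g => Finset.sum_congr rfl fun x _ => mul_comm _ _
    rw [hc (fun x => α (Z x)) v, hc (fun x => β (Z x)) u]
    ring
  · have hrange : L = LinearMap.range (Lparam V h sharpW Z) := by
      ext p
      rw [hL p, LinearMap.mem_range]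
      constructor
      · rintro ⟨α, u, rfl⟩; exact ⟨(α, u), rfl⟩
      · rintro ⟨⟨α, u⟩, rfl⟩; exact ⟨α, u, rfl⟩
    have hinj : Function.Injective (Lparam V h sharpW Z) := by
      intro x y hxy
      have := congrArg Prod.snd hxy
      simpa [Lparam, Prod.ext_iff] using this
    rw [hrange, LinearMap.finrank_range_of_inj hinj, Module.finrank_prod,
      Subspace.dual_finrank_eq, Module.finrank_fin_fun]
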